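/- Fix 1 < α < 9/8 and set K = 8(α−1)/17 > 0. Let ω, σ ∈ {−1,+1}^ℤ, n ∈ ℤ, i ≤ n, and f(n) = n^{1/(3+ε)} for some ε > 0. Define ℓ_i(η) := min{m : ∀ k ≥ m, (1/k)∑_{s=0}^{k−1} η(i+s) ≥ 8/9} and ℓ_i^α analogously with threshold α·8/9. Suppose ℓ_i^α(σ) ≤ n − i (i.e. ∑_{k=i}^{n} σ(k) ≥ α(8/9)(n−i+1)), and suppose ω satisfies ∑_{k=n+1}^{n+p} ω(k) > α(8/9)p for all p ≥ f(n+1). If the hybrid configuration σ_{[i,n]}ω_{(n,∞)} has ℓ_i(σω) > n − i, then n − i + 1 < K^{−1} f(n+1) and ℓ_i(σω) ≤ (n − i + 1) + f(n+1). -/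
import Mathlib


open Real

/-- `ℓ_i^{a}(η) = min{m : ∀ k ≥ m (k > 0), (1/k) ∑_{s<k} η(i+s) ≥ a·8/9}`. -/
noncomputable def ellAt (a : ℝ) (i : ℤ) (η : ℤ → ℤ) : ℕ :=
  sInf {m : ℕ | ∀ k ≥ m, 0 < k →
    a * (8 / 9) ≤ (1 / (k : ℝ)) * ∑ s ∈ Finset.range k, ((η (i + s) : ℤ) : ℝ)}

private lemma sum_range_eq_sum_Icc (g : ℤ → ℤ) (a : ℤ) (k : ℕ) :
    ∑ s ∈ Finset.range k, g (a + s) = ∑ j ∈ Finset.Icc a (a + k - 1), g j := by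
  induction k with
  | zero => rw [Finset.Icc_eq_empty (by omega)]; simp
  | succ k ih =>
    rw [Finset.sum_range_succ, ih]
    have h1 : Finset.Icc a (a + (k+1 : ℕ) - 1) = insert (a + k) (Finset.Icc a (a + k - 1)) := by
      ext x; simp only [Finset.mem_Icc, Finset.mem_insert]; push_cast; omega
    rw [h1, Finset.sum_insert (by simp only [Finset.mem_Icc]; omega)]
    ring

set_option maxHeartbeats 2000000 in
/-- Case 1 of the proof of Proposition 6.2: with `1 < α < 9/8`,
`K = 8(α−1)/17`, `f(n) = n^{1/(3+ε)}`, if the block `[i,n]` of `σ` is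
`α`-good (`∑_{k=i}^n σ(k) ≥ α(8/9)(n−i+1)`), the tail of `ω` beyond `n` is
`α`-good for all `p ≥ f(n+1)`, and the hybrid configuration
`σ_{[i,n]}ω_{(n,∞)}` still has `ℓ_i > n−i`, then `n−i+1 < K⁻¹ f(n+1)` and
`ℓ_i(σω) ≤ (n−i+1) + f(n+1)`. -/
theorem stmt_12 (α ε : ℝ) (hα : 1 < α) (hα' : α < 9 / 8) (hε : 0 < ε)
    (K : ℝ) (hK : K = 8 * (α - 1) / 17)
    (σ ω : ℤ → ℤ) (hσval : ∀ k, σ k = -1 ∨ σ k = 1) (hωval : ∀ k, ω k = -1 ∨ ω k = 1)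
    (n i : ℤ) (hin : i ≤ n)
    (f : ℤ → ℝ) (hf : ∀ m : ℤ, 0 ≤ m → f m = (m : ℝ) ^ ((1 : ℝ) / (3 + ε)))
    (hσ : α * (8 / 9) * ((n : ℝ) - i + 1) ≤ ∑ k ∈ Finset.Icc i n, ((σ k : ℤ) : ℝ))
    (hω : ∀ p : ℕ, f (n + 1) ≤ (p : ℝ) →
      α * (8 / 9) * (p : ℝ) < ∑ k ∈ Finset.Icc (n + 1) (n + p), ((ω k : ℤ) : ℝ))
    (η : ℤ → ℤ) (hη : ∀ k, η k = if k ≤ n then σ k else ω k)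
    (hviol : (n - i).toNat < ellAt 1 i η) :
    (n : ℝ) - i + 1 < K⁻¹ * f (n + 1) ∧
      (ellAt 1 i η : ℝ) ≤ ((n : ℝ) - i + 1) + f (n + 1) := by
  classical
  obtain ⟨F, hFdef⟩ : ∃ F, F = f (n + 1) := ⟨_, rfl⟩
  -- F > 0
  have hF0 : 0 < F := by
    by_contra h
    push_neg at h
    have h0 := hω 0 (by rw [← hFdef]; simpa using h)
    simp at h0
  obtain ⟨t, htdef⟩ : ∃ t : ℕ, t = (n - i).toNat := ⟨_, rfl⟩
  have ht : (t : ℤ) = n - i := by rw [htdef]; exact Int.toNat_of_nonneg (by omega)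
  rw [← htdef] at hviol
  obtain ⟨L, hLdef⟩ : ∃ L : ℕ, L = t + 1 := ⟨_, rfl⟩
  have hLZ : (L : ℤ) = n - i + 1 := by rw [hLdef]; push_cast; omega
  have hLR : (L : ℝ) = (n : ℝ) - i + 1 := by
    have h := congrArg (Int.cast : ℤ → ℝ) hLZ
    push_cast at h
    exact h
  have htR : (t : ℝ) = (n : ℝ) - i := by
    have h := congrArg (Int.cast : ℤ → ℝ) ht
    push_cast at h
    exact h
  obtain ⟨Sσ, hSdef⟩ : ∃ S : ℤ, S = ∑ k ∈ Finset.Icc i n, σ k := ⟨_, rfl⟩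
  obtain ⟨T, hTdef⟩ : ∃ T : ℕ → ℤ, T = fun p : ℕ => ∑ k ∈ Finset.Icc (n+1) (n + (p:ℤ)), ω k :=
    ⟨_, rfl⟩
  have hσ' : α * (8/9) * (L : ℝ) ≤ (Sσ : ℝ) := by
    rw [hLR]
    calc α * (8/9) * ((n:ℝ) - i + 1) ≤ ∑ k ∈ Finset.Icc i n, ((σ k : ℤ) : ℝ) := hσ
    _ = (Sσ : ℝ) := by rw [hSdef]; push_cast; ring
  have hω' : ∀ p : ℕ, F ≤ (p : ℝ) → α * (8/9) * (p : ℝ) < (T p : ℝ) := by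
    intro p hp
    have h1 := hω p (by rw [← hFdef]; exact hp)
    calc α * (8/9) * (p:ℝ) < ∑ k ∈ Finset.Icc (n + 1) (n + p), ((ω k : ℤ) : ℝ) := h1
    _ = (T p : ℝ) := by rw [hTdef]; push_cast; ring
  -- partial sum identities
  have keyL : ∀ p : ℕ, ∑ s ∈ Finset.range (L + p), η (i + s) = Sσ + T p := by
    intro p
    have h1 : ∑ s ∈ Finset.range L, η (i + s) + ∑ s ∈ Finset.Ico L (L+p), η (i + s)
        = ∑ s ∈ Finset.range (L+p), η (i+s) :=
      Finset.sum_range_add_sum_Ico _ (Nat.le_add_right _ _)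
    rw [← h1]
    congr 1
    · have h2 : ∀ s ∈ Finset.range L, η (i + s) = σ (i + s) := by
        intro s hs
        rw [hη, if_pos]
        simp only [Finset.mem_range] at hs
        have : (s : ℤ) ≤ n - i := by omega
        omega
      rw [Finset.sum_congr rfl h2, sum_range_eq_sum_Icc]
      have he : i + (L:ℤ) - 1 = n := by omega
      rw [he, hSdef]
    · rw [Finset.sum_Ico_eq_sum_range]
      simp only [Nat.add_sub_cancel_left]
      have h3 : ∀ s ∈ Finset.range p, η (i + ((L : ℕ) + s : ℕ)) = ω ((n+1) + s) := by
        intro s hs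
        have he : i + (((L : ℕ) + s : ℕ) : ℤ) = (n+1) + (s:ℤ) := by push_cast; omega
        rw [he, hη, if_neg (by omega)]
      rw [Finset.sum_congr rfl h3, sum_range_eq_sum_Icc]
      have he2 : n + 1 + (p:ℤ) - 1 = n + p := by omega
      rw [he2, hTdef]
  have keyt : ∑ s ∈ Finset.range t, η (i + s) = Sσ - σ n := by
    have h2 : ∀ s ∈ Finset.range t, η (i + s) = σ (i + s) := by
      intro s hs
      rw [hη, if_pos]
      simp only [Finset.mem_range] at hs
      have : (s : ℤ) < n - i := by omega
      omega
    rw [Finset.sum_congr rfl h2, sum_range_eq_sum_Icc]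
    have h4 : Finset.Icc i n = insert n (Finset.Icc i (i + (t:ℤ) - 1)) := by
      ext x; simp only [Finset.mem_Icc, Finset.mem_insert]; omega
    have h5 : Sσ = σ n + ∑ j ∈ Finset.Icc i (i + (t:ℤ) - 1), σ j := by
      rw [hSdef, h4, Finset.sum_insert (by simp only [Finset.mem_Icc]; omega)]
    omega
  -- lower bound on T
  have hTlow : ∀ p : ℕ, -(p:ℤ) ≤ T p := by
    intro p
    have h1 : ∀ k ∈ Finset.Icc (n+1) (n + (p:ℤ)), (-1 : ℤ) ≤ ω k := by
      intro k _; rcases hωval k with h | h <;> omega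
    have h2 := Finset.sum_le_sum h1
    have h3 : ∑ _k ∈ Finset.Icc (n+1) (n + (p:ℤ)), (-1 : ℤ) = -(p:ℤ) := by
      rw [Finset.sum_const, Int.card_Icc]
      simp only [nsmul_eq_mul]
      have h4 : (n + (p:ℤ) + 1 - (n + 1)).toNat = p := by omega
      rw [h4]; ring
    rw [hTdef]
    rw [h3] at h2
    exact h2
  obtain ⟨p₀, hp₀def⟩ : ∃ p₀ : ℕ, p₀ = ⌈F⌉₊ := ⟨_, rfl⟩
  have hp₀pos : 1 ≤ p₀ := by
    rw [hp₀def]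
    exact Nat.ceil_pos.mpr hF0
  have hFp₀ : F ≤ (p₀ : ℝ) := by rw [hp₀def]; exact Nat.le_ceil F
  have hp₀F : (p₀ : ℝ) < F + 1 := by
    rw [hp₀def]
    exact_mod_cast Nat.ceil_lt_add_one hF0.le
  -- integer bound on T (p₀ - 1)
  have hT9 : 8 * ((p₀:ℤ) - 1) ≤ 9 * T (p₀ - 1) := by
    have h1 : α * (8/9) * (p₀:ℝ) < (T p₀ : ℝ) := hω' p₀ hFp₀
    have hp₀nn : (0:ℝ) ≤ (p₀:ℝ) := Nat.cast_nonneg p₀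
    have h2 : (8:ℝ) * (p₀:ℝ) < 9 * (T p₀ : ℝ) := by nlinarith
    have h3 : 8 * (p₀:ℤ) < 9 * T p₀ := by exact_mod_cast h2
    have h4 : T p₀ = T (p₀ - 1) + ω (n + (p₀:ℤ)) := by
      have hc : ((p₀ - 1 : ℕ) : ℤ) = (p₀:ℤ) - 1 := by omega
      have hi1 : Finset.Icc (n+1) (n + (p₀:ℤ)) =
          insert (n + (p₀:ℤ)) (Finset.Icc (n+1) (n + ((p₀ - 1 : ℕ):ℤ))) := by
        ext x
        simp only [Finset.mem_Icc, Finset.mem_insert, hc]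
        omega
      rw [hTdef]
      simp only
      rw [hi1, Finset.sum_insert (by simp only [Finset.mem_Icc, hc]; omega)]
      ring
    have h5 : ω (n + (p₀:ℤ)) ≤ 1 := by rcases hωval (n + (p₀:ℤ)) with h | h <;> omega
    omega
  -- all k ≥ t + p₀ are good
  have hgood : ∀ k : ℕ, t + p₀ ≤ k → 0 < k →
      (1:ℝ) * (8/9) ≤ (1/(k:ℝ)) * ∑ s ∈ Finset.range k, ((η (i + s) : ℤ) : ℝ) := by
    intro k hk _
    have hkL : L ≤ k := by omega
    obtain ⟨p, rfl⟩ : ∃ p, k = L + p := ⟨k - L, by omega⟩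
    have hsum : ∑ s ∈ Finset.range (L + p), ((η (i + s) : ℤ) : ℝ) = (Sσ : ℝ) + (T p : ℝ) := by
      have h := congrArg (Int.cast : ℤ → ℝ) (keyL p)
      push_cast at h
      convert h using 2 <;> push_cast <;> ring
    have hkpos : (0:ℝ) < ((L + p : ℕ) : ℝ) := by
      have : 0 < L + p := by omega
      exact_mod_cast this
    rw [hsum, one_mul, one_div, inv_mul_eq_div, le_div_iff₀ hkpos]
    have hcast : ((L + p : ℕ) : ℝ) = (L:ℝ) + (p:ℝ) := by push_cast; ring
    rw [hcast]
    have hLnn : (0:ℝ) ≤ (L:ℝ) := Nat.cast_nonneg L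
    have hpnn : (0:ℝ) ≤ (p:ℝ) := Nat.cast_nonneg p
    rcases le_or_gt (p₀ : ℝ) (p : ℝ) with hcase | hcase
    · have h1 := hω' p (le_trans hFp₀ hcase)
      nlinarith
    · -- p = p₀ - 1
      have hpe : p = p₀ - 1 := by
        have h2 : (p:ℕ) < p₀ := by exact_mod_cast hcase
        omega
      subst hpe
      have hTc : (8:ℝ) * ((p₀:ℝ) - 1) ≤ 9 * ((T (p₀ - 1) : ℤ) : ℝ) := by exact_mod_cast hT9
      have hc : (((p₀ - 1 : ℕ)):ℝ) = (p₀:ℝ) - 1 := by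
        have h6 : ((p₀ - 1 : ℕ) : ℤ) = (p₀:ℤ) - 1 := by omega
        exact_mod_cast h6
      rw [hc]
      nlinarith
  -- hence ellAt ≤ t + p₀
  have hupper : ellAt 1 i η ≤ t + p₀ := Nat.sInf_le (fun k hk hk0 => hgood k hk hk0)
  -- the violation: t is not in the defining set
  have hbadex : ∃ k, t ≤ k ∧ 0 < k ∧
      (1/(k:ℝ)) * ∑ s ∈ Finset.range k, ((η (i + s) : ℤ) : ℝ) < 1 * (8/9) := by
    by_contra h
    push_neg at h
    have hle : ellAt 1 i η ≤ t := Nat.sInf_le (fun k hk hk0 => h k hk hk0)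
    omega
  obtain ⟨k, hk1, hk0, hbad⟩ := hbadex
  have hkpos : (0:ℝ) < (k:ℝ) := by exact_mod_cast hk0
  have hbad' : ∑ s ∈ Finset.range k, ((η (i + s) : ℤ) : ℝ) < (8/9) * (k:ℝ) := by
    rw [one_mul, one_div, inv_mul_eq_div, div_lt_iff₀ hkpos] at hbad
    linarith
  have hLpos : (0:ℝ) < (L:ℝ) := by
    have : 0 < L := by omega
    exact_mod_cast this
  have goal1 : (n : ℝ) - i + 1 < K⁻¹ * F := by
    rcases eq_or_lt_of_le hk1 with hkt | hkt
    · -- k = t, impossible by integrality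
      exfalso
      have hkt' : k = t := hkt.symm
      subst hkt'
      have hsum : ∑ s ∈ Finset.range k, ((η (i + s) : ℤ) : ℝ) = ((Sσ - σ n : ℤ) : ℝ) := by
        exact_mod_cast congrArg (Int.cast : ℤ → ℝ) keyt
      rw [hsum] at hbad'
      have hA' : (8:ℝ) * (L:ℝ) < 9 * (Sσ : ℝ) := by nlinarith
      have hA : 8 * (L:ℤ) < 9 * Sσ := by exact_mod_cast hA'
      have hB' : (9:ℝ) * ((Sσ - σ n : ℤ):ℝ) < 8 * (k:ℝ) := by
        push_cast at hbad' ⊢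
        linarith
      have hB : 9 * (Sσ - σ n) < 8 * (k:ℤ) := by exact_mod_cast hB'
      have hC : σ n ≤ 1 := by rcases hσval n with h | h <;> omega
      omega
    · -- k ≥ L
      have hkL : L ≤ k := by omega
      obtain ⟨p, rfl⟩ : ∃ p, k = L + p := ⟨k - L, by omega⟩
      have hsum : ∑ s ∈ Finset.range (L + p), ((η (i + s) : ℤ) : ℝ) = (Sσ : ℝ) + (T p : ℝ) := by
        have h := congrArg (Int.cast : ℤ → ℝ) (keyL p)
        push_cast at h
        convert h using 2 <;> push_cast <;> ring
      rw [hsum] at hbad'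
      have hcast : ((L + p : ℕ) : ℝ) = (L:ℝ) + (p:ℝ) := by push_cast; ring
      rw [hcast] at hbad'
      have hpnn : (0:ℝ) ≤ (p:ℝ) := Nat.cast_nonneg p
      rcases le_or_gt F (p:ℝ) with hcase | hcase
      · exfalso
        have h1 := hω' p hcase
        nlinarith
      · have hTl : -((p:ℤ):ℝ) ≤ ((T p : ℤ) : ℝ) := by exact_mod_cast hTlow p
        push_cast at hTl
        -- (α-1)(8/9) L < (17/9) p < (17/9) F
        have h1 : (α - 1) * (8/9) * (L:ℝ) < (17/9) * (p:ℝ) := by nlinarith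
        have h2 : (α - 1) * (8/9) * (L:ℝ) < (17/9) * F := by nlinarith
        rw [← hLR]
        have hden : (0:ℝ) < 8 * (α - 1) := by nlinarith
        have hK0 : 0 < K := by rw [hK]; positivity
        have hKinv : K⁻¹ = 17 / (8 * (α - 1)) := by rw [hK, inv_div]
        rw [hKinv, div_mul_eq_mul_div, lt_div_iff₀ hden]
        nlinarith
  refine ⟨by rw [hFdef] at goal1; exact goal1, ?_⟩
  have h1 : ((ellAt 1 i η : ℕ) : ℝ) ≤ ((t + p₀ : ℕ) : ℝ) := by exact_mod_cast hupper
  have h2 : ((t + p₀ : ℕ) : ℝ) = ((n:ℝ) - i) + (p₀:ℝ) := by push_cast; rw [htR]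
  rw [← hFdef]
  linarith [hp₀F, h1, h2.le]
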